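/- A permutation π of size n is in the image of the bubblesort operator B (i.e., there exists τ with B(τ) = π) if and only if π ends with its maximum, i.e., πₙ = n. -/

import Mathlib

/-- One pass of bubblesort on a list of naturals. -/
def bpass : List ℕ → List ℕ
  | [] => []
  | [a] => [a]
  | a :: b :: l => if b < a then b :: bpass (a :: l) else a :: bpass (b :: l)

/-- The identity permutation 1 2 ... n as a list. -/
def idList (n : ℕ) : List ℕ := List.map (· + 1) (List.range n)

/-- `l` is (the word of) a permutation of size `n`, i.e. a rearrangement of 1,...,n. -/
def IsPermList (n : ℕ) (l : List ℕ) : Prop := l.Perm (idList n)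

/-- position `j` of `l` holds a left-to-right maximum. -/
def IsLTRMax (l : List ℕ) (j : ℕ) : Prop :=
  j < l.length ∧ ∀ i < j, l.getD i 0 < l.getD j 0

instance (l : List ℕ) (j : ℕ) : Decidable (IsLTRMax l j) := by
  unfold IsLTRMax; infer_instance

/-- the number of left-to-right maxima of `l`. -/
def ltrCount (l : List ℕ) : ℕ :=
  ((List.range l.length).filter fun j => decide (IsLTRMax l j)).length

/-- the length of the longest suffix of `l` consisting of left-to-right maxima. -/
def suffLen (l : List ℕ) : ℕ :=
  ((List.range l.length).takeWhile fun j => decide (IsLTRMax l (l.length - 1 - j))).length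

/-- `σ` is a node of the tree `T(π)` of iterated bubblesort preimages. -/
def IsNode (n : ℕ) (π σ : List ℕ) : Prop :=
  IsPermList n σ ∧ ∃ j, bpass^[j] σ = π

/-- `σ` is a node of `T(π)` at height `j` (j passes needed to reach π, and no fewer). -/
def IsNodeAt (n : ℕ) (π σ : List ℕ) (j : ℕ) : Prop :=
  IsPermList n σ ∧ bpass^[j] σ = π ∧ ∀ i < j, bpass^[i] σ ≠ π

/-- `τ` is a leaf: it has no child, i.e. no bubblesort preimage other than itself. -/
def IsLeafNode (n : ℕ) (τ : List ℕ) : Prop :=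
  ¬ ∃ ρ, IsPermList n ρ ∧ ρ ≠ τ ∧ bpass ρ = τ

/-- `T(π)` and `T(τ)` are isomorphic as rooted trees: there is a bijection between
their node sets sending root to root and commuting with the parent map `bpass`. -/
def TreeIso (n : ℕ) (π τ : List ℕ) : Prop :=
  ∃ φ : List ℕ → List ℕ,
    (∀ σ, IsNode n π σ → IsNode n τ (φ σ)) ∧
    (∀ σ σ', IsNode n π σ → IsNode n π σ' → φ σ = φ σ' → σ = σ') ∧
    (∀ ρ, IsNode n τ ρ → ∃ σ, IsNode n π σ ∧ φ σ = ρ) ∧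
    φ π = τ ∧
    (∀ σ, IsNode n π σ → σ ≠ π → φ (bpass σ) = bpass (φ σ))


lemma bpass_perm (l : List ℕ) : (bpass l).Perm l := by
  induction l using bpass.induct with
  | case1 => simp [bpass]
  | case2 a => simp [bpass]
  | case3 a b l h ih =>
    rw [bpass, if_pos h]
    exact ((ih.cons b).trans (List.Perm.swap a b l))
  | case4 a b l h ih =>
    rw [bpass, if_neg h]
    exact ih.cons a

lemma bpass_cons_max (a : ℕ) (l : List ℕ) (h : ∀ x ∈ l, x < a) :
    bpass (a :: l) = l ++ [a] := by
  induction l with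
  | nil => simp [bpass]
  | cons b l ih =>
    rw [bpass, if_pos (h b (by simp))]
    simp only [List.cons_append, List.cons.injEq, true_and]
    exact ih (fun x hx => h x (by simp [hx]))

lemma getLast?_cons_ne {α} (a : α) (l : List α) (h : l ≠ []) :
    (a :: l).getLast? = l.getLast? := by
  cases l with
  | nil => exact absurd rfl h
  | cons b t => rw [List.getLast?_cons_cons]

lemma bpass_ne_nil (a : ℕ) (l : List ℕ) : bpass (a :: l) ≠ [] := by
  intro hnil
  have := (bpass_perm (a :: l)).length_eq
  rw [hnil] at this; simp at this

lemma bpass_getLast (l : List ℕ) (m : ℕ) (hm : m ∈ l) (hle : ∀ x ∈ l, x ≤ m) :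
    (bpass l).getLast? = some m := by
  induction l using bpass.induct with
  | case1 => simp at hm
  | case2 a =>
    simp at hm; subst hm; simp [bpass]
  | case3 a b l h ih =>
    rw [bpass, if_pos h]
    have hm' : m ∈ a :: l := by
      rcases List.mem_cons.mp hm with rfl | hm2
      · simp
      rcases List.mem_cons.mp hm2 with rfl | hm3
      · exact absurd (lt_of_lt_of_le h (hle a (by simp))) (lt_irrefl _)
      · exact List.mem_cons.mpr (Or.inr hm3)
    have hkey := ih hm' (fun x hx => hle x (by
      rcases List.mem_cons.mp hx with rfl | hx2
      · simp
      · simp [hx2]))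
    rw [getLast?_cons_ne _ _ (bpass_ne_nil a l), hkey]
  | case4 a b l h ih =>
    rw [bpass, if_neg h]
    have hm' : m ∈ b :: l := by
      rcases List.mem_cons.mp hm with rfl | hm2
      · have hab : m ≤ b := le_of_not_gt h
        have hbm : b ≤ m := hle b (by simp)
        simp [le_antisymm hab hbm]
      · exact hm2
    have hkey := ih hm' (fun x hx => hle x (by
      rcases List.mem_cons.mp hx with rfl | hx2
      · simp
      · simp [hx2]))
    rw [getLast?_cons_ne _ _ (bpass_ne_nil b l), hkey]

lemma mem_idList {n x : ℕ} : x ∈ idList n ↔ 1 ≤ x ∧ x ≤ n := by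
  simp only [idList, List.mem_map, List.mem_range]
  constructor
  · rintro ⟨y, hy, rfl⟩; omega
  · rintro ⟨h1, h2⟩; exact ⟨x - 1, by omega, by omega⟩

lemma nodup_idList (n : ℕ) : (idList n).Nodup := by
  exact (List.nodup_range : (List.range n).Nodup).map (fun a b => by omega)

/-- A permutation `π` of size `n ≥ 1` is in the image of bubblesort iff `πₙ = n`. -/
theorem stmt_1 (n : ℕ) (hn : 1 ≤ n) (π : List ℕ) (hπ : IsPermList n π) :
    (∃ τ, IsPermList n τ ∧ bpass τ = π) ↔ π.getLast? = some n := by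
  have hlen : π.length = n := by
    have := hπ.length_eq
    simpa [idList] using this
  have hmem : ∀ x ∈ π, x ≤ n := fun x hx => (mem_idList.mp (hπ.mem_iff.mp hx)).2
  have hnmem : n ∈ π := hπ.mem_iff.mpr (mem_idList.mpr ⟨hn, le_refl n⟩)
  have hnodup : π.Nodup := hπ.nodup_iff.mpr (nodup_idList n)
  have hne : π ≠ [] := by intro h; rw [h] at hlen; simp at hlen; omega
  constructor
  · rintro ⟨τ, hτ, rfl⟩
    have hτmem : n ∈ τ := hτ.mem_iff.mpr (mem_idList.mpr ⟨hn, le_refl n⟩)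
    have hτle : ∀ x ∈ τ, x ≤ n := fun x hx => (mem_idList.mp (hτ.mem_iff.mp hx)).2
    exact bpass_getLast τ n hτmem hτle
  · intro hlast
    set π' := π.dropLast with hπ'
    have hsplit : π = π' ++ [n] := by
      have h1 := List.dropLast_append_getLast hne
      rw [List.getLast?_eq_getLast hne] at hlast
      rw [Option.some_inj] at hlast
      rw [hlast] at h1
      exact h1.symm
    have hlt : ∀ x ∈ π', x < n := by
      intro x hx
      have hxπ : x ∈ π := by rw [hsplit]; simp [hx]
      have := hmem x hxπ
      rcases lt_or_eq_of_le this with h | rfl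
      · exact h
      · exfalso
        rw [hsplit] at hnodup
        exact (List.disjoint_of_nodup_append hnodup) hx (by simp)
    refine ⟨n :: π', ?_, ?_⟩
    · have : (n :: π').Perm (π' ++ [n]) := by
        simpa using (List.perm_append_comm (l₁ := [n]) (l₂ := π'))
      exact (this.trans (hsplit ▸ hπ))
    · rw [bpass_cons_max n π' hlt, ← hsplit]
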